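/- Let A be a commutative Noetherian ring with unity and 𝔞 ⊆ A[x₁,…,xₙ] a nonzero ideal with Gröbner basis G with respect to a monomial order. If every element of G has leading coefficient 1 (G is monic), then A[x₁,…,xₙ]/𝔞 is a free A-module with basis given by the residue classes of monomials x^α not divisible by any Lm(g) for g ∈ G. -/

import Mathlib

open MvPolynomial

set_option maxHeartbeats 1000000

/-- The leading monomial (multidegree) of a polynomial with respect to a monomial order. -/
noncomputable def mDeg {A : Type*} [CommRing A] {n : ℕ} (m : MonomialOrder (Fin n))
    (f : MvPolynomial (Fin n) A) : Fin n →₀ ℕ :=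
  m.toSyn.symm (f.support.sup m.toSyn)

/-- The leading coefficient of a polynomial with respect to a monomial order. -/
noncomputable def mLC {A : Type*} [CommRing A] {n : ℕ} (m : MonomialOrder (Fin n))
    (f : MvPolynomial (Fin n) A) : A :=
  f.coeff (mDeg m f)

/-- The leading term `Lt(f) = Lc(f)·Lm(f)` of a polynomial. -/
noncomputable def leadTerm {A : Type*} [CommRing A] {n : ℕ} (m : MonomialOrder (Fin n))
    (f : MvPolynomial (Fin n) A) : MvPolynomial (Fin n) A :=
  monomial (mDeg m f) (mLC m f)

/-- The leading term ideal `⟨Lt(𝔞)⟩` of an ideal. -/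
noncomputable def leadTermIdeal {A : Type*} [CommRing A] {n : ℕ} (m : MonomialOrder (Fin n))
    (𝔞 : Ideal (MvPolynomial (Fin n) A)) : Ideal (MvPolynomial (Fin n) A) :=
  Ideal.span {p | ∃ f ∈ 𝔞, f ≠ 0 ∧ p = leadTerm m f}

section Aux

variable {A : Type*} [CommRing A] {n : ℕ} (m : MonomialOrder (Fin n))

lemma mDeg_mem_support {f : MvPolynomial (Fin n) A} (hf : f ≠ 0) : mDeg m f ∈ f.support := by
  obtain ⟨b, hb, hb2⟩ := Finset.exists_mem_eq_sup f.support
    (by simpa [Finset.nonempty_iff_ne_empty, MvPolynomial.support_eq_empty] using hf) m.toSyn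
  rw [mDeg, hb2, AddEquiv.symm_apply_apply]
  exact hb

lemma mLC_ne_zero {f : MvPolynomial (Fin n) A} (hf : f ≠ 0) : mLC m f ≠ 0 := by
  simpa [mLC, MvPolynomial.mem_support_iff] using mDeg_mem_support m hf

lemma toSyn_mDeg {f : MvPolynomial (Fin n) A} :
    m.toSyn (mDeg m f) = f.support.sup m.toSyn := by
  rw [mDeg, AddEquiv.apply_symm_apply]

lemma le_mDeg {f : MvPolynomial (Fin n) A} {γ : Fin n →₀ ℕ} (hγ : γ ∈ f.support) :
    m.toSyn γ ≤ m.toSyn (mDeg m f) := by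
  rw [toSyn_mDeg]; exact Finset.le_sup hγ

lemma lt_mDeg {f : MvPolynomial (Fin n) A} {γ : Fin n →₀ ℕ} (hγ : γ ∈ f.support)
    (hne : γ ≠ mDeg m f) : m.toSyn γ < m.toSyn (mDeg m f) :=
  lt_of_le_of_ne (le_mDeg m hγ) (fun h => hne (m.toSyn.injective h))

/-- Membership in an ideal generated by monic monomials forces divisibility of exponents. -/
lemma mem_monomial_span {S : Set (Fin n →₀ ℕ)} {p : MvPolynomial (Fin n) A}
    (hp : p ∈ Ideal.span ((fun δ => monomial δ (1 : A)) '' S))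
    {α : Fin n →₀ ℕ} (hα : p.coeff α ≠ 0) : ∃ δ ∈ S, δ ≤ α := by
  classical
  induction hp using Submodule.span_induction generalizing α with
  | mem x hx =>
      obtain ⟨δ, hδ, rfl⟩ := hx
      refine ⟨δ, hδ, ?_⟩
      by_contra h
      rw [MvPolynomial.coeff_monomial] at hα
      split_ifs at hα with h'
      · exact h (h' ▸ le_rfl)
      · exact hα rfl
  | zero => simp at hα
  | add x y hx hy ihx ihy =>
      rw [MvPolynomial.coeff_add] at hα
      rcases (by
        by_contra h
        push_neg at h
        simp [h.1, h.2] at hα : x.coeff α ≠ 0 ∨ y.coeff α ≠ 0) with h | h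
      · exact ihx h
      · exact ihy h
  | smul a x hx ihx =>
      rw [smul_eq_mul, MvPolynomial.coeff_mul] at hα
      obtain ⟨⟨β, γ⟩, hmem, hne⟩ := Finset.exists_ne_zero_of_sum_ne_zero hα
      have hγ : x.coeff γ ≠ 0 := fun h => hne (by simp [h])
      obtain ⟨δ, hδ, hle⟩ := ihx hγ
      refine ⟨δ, hδ, hle.trans ?_⟩
      rw [← Finset.HasAntidiagonal.mem_antidiagonal.mp hmem]
      exact le_add_self

lemma coeff_monomial_mul_mDeg (β : Fin n →₀ ℕ) (g : MvPolynomial (Fin n) A) :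
    (monomial β (1 : A) * g).coeff (β + mDeg m g) = mLC m g := by
  rw [MvPolynomial.coeff_monomial_mul, one_mul, mLC]

lemma le_of_mem_support_monomial_mul {β : Fin n →₀ ℕ} {g : MvPolynomial (Fin n) A}
    {γ : Fin n →₀ ℕ} (hγ : (monomial β (1 : A) * g).coeff γ ≠ 0) :
    m.toSyn γ ≤ m.toSyn (β + mDeg m g) := by
  rw [MvPolynomial.coeff_monomial_mul'] at hγ
  by_cases h : β ≤ γ
  · have h2 : g.coeff (γ - β) ≠ 0 := by
      intro h'; simp [h, h'] at hγ
    have := le_mDeg m (MvPolynomial.mem_support_iff.mpr h2)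
    calc m.toSyn γ = m.toSyn (β + (γ - β)) := by rw [add_tsub_cancel_of_le h]
    _ = m.toSyn β + m.toSyn (γ - β) := by rw [map_add]
    _ ≤ m.toSyn β + m.toSyn (mDeg m g) := by exact add_le_add_right this _
    _ = m.toSyn (β + mDeg m g) := by rw [map_add]
  · simp [h] at hγ

end Aux

/-- **Macaulay–Buchberger basis theorem over rings (free case).**
If `G` is a monic Gröbner basis of a nonzero ideal `𝔞 ⊆ A[x₁,…,xₙ]` over a commutative
Noetherian ring `A`, then `A[x₁,…,xₙ]/𝔞` is a free `A`-module with basis the residue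
classes of the monomials `x^α` not divisible by any `Lm(g)`, `g ∈ G`. -/
theorem monic_groebner_basis_free_quotient
    {A : Type*} [CommRing A] [IsNoetherianRing A] {n : ℕ}
    (m : MonomialOrder (Fin n)) (𝔞 : Ideal (MvPolynomial (Fin n) A)) (hne : 𝔞 ≠ ⊥)
    (G : Finset (MvPolynomial (Fin n) A)) (hGsub : ↑G ⊆ (𝔞 : Set (MvPolynomial (Fin n) A)))
    (hG0 : (0 : MvPolynomial (Fin n) A) ∉ G)
    (hGB : Ideal.span {p | ∃ g ∈ G, p = leadTerm m g} = leadTermIdeal m 𝔞)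
    (hmonic : ∀ g ∈ G, mLC m g = 1) :
    ∃ B : Module.Basis {α : Fin n →₀ ℕ // ∀ g ∈ G, ¬ mDeg m g ≤ α} A
        (MvPolynomial (Fin n) A ⧸ 𝔞),
      ∀ s, B s = Ideal.Quotient.mk 𝔞 (monomial s.1 1) := by
  classical
  set S : Set (Fin n →₀ ℕ) := {α | ∀ g ∈ G, ¬ mDeg m g ≤ α} with hS
  -- The monomial family in the polynomial ring
  set w : {α : Fin n →₀ ℕ // ∀ g ∈ G, ¬ mDeg m g ≤ α} → MvPolynomial (Fin n) A :=
    fun s => monomial s.1 1 with hw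
  -- Key lemma A : no nonzero element of 𝔞 is supported on standard monomials.
  have keyA : ∀ p ∈ 𝔞, (↑p.support ⊆ S) → p = 0 := by
    intro p hp hsup
    by_contra hp0
    have hlt : leadTerm m p ∈ Ideal.span {q | ∃ g ∈ G, q = leadTerm m g} := by
      rw [hGB]
      exact Ideal.subset_span ⟨p, hp, hp0, rfl⟩
    have hsub : {q | ∃ g ∈ G, q = leadTerm m g} ⊆
        (fun δ => monomial δ (1 : A)) '' (mDeg m '' (↑G : Set (MvPolynomial (Fin n) A))) := by
      rintro q ⟨g, hg, rfl⟩
      exact ⟨mDeg m g, ⟨g, hg, rfl⟩, by rw [leadTerm, hmonic g hg]⟩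
    have hmem : leadTerm m p ∈ Ideal.span ((fun δ => monomial δ (1 : A)) '' (mDeg m '' (↑G : Set (MvPolynomial (Fin n) A)))) :=
      Ideal.span_mono hsub hlt
    have hcoeff : (leadTerm m p).coeff (mDeg m p) ≠ 0 := by
      rw [leadTerm, MvPolynomial.coeff_monomial]
      simpa using mLC_ne_zero m hp0
    obtain ⟨δ, hδ, hle⟩ := mem_monomial_span hmem hcoeff
    obtain ⟨g, hg, rfl⟩ := hδ
    exact hsup (mDeg_mem_support m hp0) g hg hle
  -- Key lemma B : reduction/spanning.
  have keyB : ∀ d : m.syn, ∀ f : MvPolynomial (Fin n) A, f.support.sup m.toSyn ≤ d →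
      Ideal.Quotient.mk 𝔞 f ∈ Submodule.span A
        (Set.range fun s : {α : Fin n →₀ ℕ // ∀ g ∈ G, ¬ mDeg m g ≤ α} =>
          Ideal.Quotient.mk 𝔞 (w s)) := by
    intro d
    induction d using WellFoundedLT.induction with
    | _ d IH =>
      intro f hfd
      by_cases hf0 : f = 0
      · simp [hf0]
      set α := mDeg m f with hα
      have hαsup : m.toSyn α = f.support.sup m.toSyn := toSyn_mDeg m
      have hαd : m.toSyn α ≤ d := hαsup ▸ hfd
      set c := mLC m f with hc
      by_cases hstd : ∀ g ∈ G, ¬ mDeg m g ≤ α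
      · -- leading monomial is standard; strip it off
        set f' := f - monomial α c with hf'
        have hcoeffα : f'.coeff α = 0 := by
          simp [hf', MvPolynomial.coeff_monomial, hc, mLC, hα]
        have hlt : ∀ γ ∈ f'.support, m.toSyn γ < m.toSyn α := by
          intro γ hγ
          have hγα : γ ≠ α := fun h => by
            rw [MvPolynomial.mem_support_iff, h, hcoeffα] at hγ; exact hγ rfl
          have hγf : γ ∈ f.support := by
            rw [MvPolynomial.mem_support_iff] at hγ ⊢
            intro h
            apply hγ
            simp [hf', MvPolynomial.coeff_sub, h, MvPolynomial.coeff_monomial,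
              Ne.symm hγα]
          exact lt_mDeg m hγf hγα
        have hrw : Ideal.Quotient.mk 𝔞 f =
            c • Ideal.Quotient.mk 𝔞 (w ⟨α, hstd⟩) + Ideal.Quotient.mk 𝔞 f' := by
          have : f = monomial α c + f' := by rw [hf']; ring
          rw [this, map_add]
          congr 1
          rw [hw]
          rw [show ((monomial α) c : MvPolynomial (Fin n) A) = c • monomial α 1 by
            rw [MvPolynomial.smul_monomial, smul_eq_mul, mul_one]]
          rw [← Ideal.Quotient.mkₐ_eq_mk A, map_smul]
        rw [hrw]
        refine Submodule.add_mem _ (Submodule.smul_mem _ _ (Submodule.subset_span ⟨_, rfl⟩)) ?_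
        by_cases hf'0 : f' = 0
        · simp [hf'0]
        · have hd' : f'.support.sup m.toSyn < d := by
            have := hlt _ (mDeg_mem_support m hf'0)
            rw [toSyn_mDeg] at this
            exact lt_of_lt_of_le this hαd
          exact IH _ hd' f' le_rfl
      · -- leading monomial divisible by some mDeg g : reduce
        push_neg at hstd
        obtain ⟨g, hg, hgle⟩ := hstd
        set β := α - mDeg m g with hβ
        have hβα : β + mDeg m g = α := by
          rw [hβ, tsub_add_cancel_of_le hgle]
        set f' := f - c • (monomial β (1 : A) * g) with hf'
        have hmk : Ideal.Quotient.mk 𝔞 f' = Ideal.Quotient.mk 𝔞 f := by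
          rw [hf', map_sub, sub_eq_self, ← map_zero (Ideal.Quotient.mk 𝔞)]
          rw [Ideal.Quotient.mk_eq_mk_iff_sub_mem]
          rw [sub_zero, MvPolynomial.smul_eq_C_mul]
          exact Ideal.mul_mem_left _ _ (Ideal.mul_mem_left _ _ (hGsub hg))
        have hcoeffα : f'.coeff α = 0 := by
          rw [hf', MvPolynomial.coeff_sub, MvPolynomial.coeff_smul, ← hβα,
            coeff_monomial_mul_mDeg, hmonic g hg, smul_eq_mul, mul_one, hβα]
          rw [sub_eq_zero, hc, mLC, hα]
        have hlt : ∀ γ ∈ f'.support, m.toSyn γ < m.toSyn α := by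
          intro γ hγ
          have hγα : γ ≠ α := fun h => by
            rw [MvPolynomial.mem_support_iff, h, hcoeffα] at hγ; exact hγ rfl
          rw [MvPolynomial.mem_support_iff, hf', MvPolynomial.coeff_sub,
            MvPolynomial.coeff_smul] at hγ
          have : f.coeff γ ≠ 0 ∨ (monomial β (1 : A) * g).coeff γ ≠ 0 := by
            by_contra h
            push_neg at h
            simp [h.1, h.2] at hγ
          have hle : m.toSyn γ ≤ m.toSyn α := by
            rcases this with h | h
            · exact le_mDeg m (MvPolynomial.mem_support_iff.mpr h)
            · have := le_of_mem_support_monomial_mul m h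
              rwa [hβα] at this
          exact lt_of_le_of_ne hle (fun h => hγα (m.toSyn.injective h))
        rw [← hmk]
        by_cases hf'0 : f' = 0
        · simp [hf'0]
        · have hd' : f'.support.sup m.toSyn < d := by
            have := hlt _ (mDeg_mem_support m hf'0)
            rw [toSyn_mDeg] at this
            exact lt_of_lt_of_le this hαd
          exact IH _ hd' f' le_rfl
  -- support of elements of the span of standard monomials
  have hsupp : ∀ p ∈ Submodule.span A (Set.range w), (↑p.support ⊆ S) := by
    intro p hp
    induction hp using Submodule.span_induction with
    | mem x hx =>
        obtain ⟨s, rfl⟩ := hx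
        intro γ hγ
        have := MvPolynomial.support_monomial_subset (s := s.1) (a := (1 : A)) hγ
        rw [Finset.mem_singleton] at this
        exact this ▸ s.2
    | zero => simp
    | add x y hx hy ihx ihy =>
        intro γ hγ
        rcases Finset.mem_union.mp (MvPolynomial.support_add hγ) with h | h
        · exact ihx h
        · exact ihy h
    | smul a x hx ihx =>
        intro γ hγ
        exact ihx (Finsupp.support_smul hγ)
  -- linear independence
  have hli : LinearIndependent A (fun s => Ideal.Quotient.mk 𝔞 (w s)) := by
    have hliw : LinearIndependent A w := by
      have hw2 : w = fun s => (MvPolynomial.basisMonomials (Fin n) A) s.1 := by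
        funext s
        rw [hw, MvPolynomial.coe_basisMonomials]
      rw [hw2]
      exact (MvPolynomial.basisMonomials (Fin n) A).linearIndependent.comp
        (Subtype.val : {α : Fin n →₀ ℕ // ∀ g ∈ G, ¬ mDeg m g ≤ α} → (Fin n →₀ ℕ))
        Subtype.val_injective
    have hdisj : Disjoint (Submodule.span A (Set.range w))
        (LinearMap.ker (Ideal.Quotient.mkₐ A 𝔞).toLinearMap) := by
      rw [Submodule.disjoint_def]
      intro x hx hker
      rw [LinearMap.mem_ker] at hker
      have hx𝔞 : x ∈ 𝔞 := by
        rwa [← Ideal.Quotient.eq_zero_iff_mem]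
      exact keyA x hx𝔞 (hsupp x hx)
    exact hliw.map hdisj
  -- spanning
  have hsp : ⊤ ≤ Submodule.span A (Set.range fun s => Ideal.Quotient.mk 𝔞 (w s)) := by
    intro x _
    obtain ⟨f, rfl⟩ := Ideal.Quotient.mk_surjective x
    exact keyB (f.support.sup m.toSyn) f le_rfl
  exact ⟨Module.Basis.mk hli hsp, fun s => Module.Basis.mk_apply hli hsp s⟩
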